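/- arXiv:1712.05135 — 2 statements merged into one kernel-verified Lean document; each statement's English description precedes it below -/
import Mathlib

section
/- Fix n ≥ 1, ρ ∈ [0,1), and k ∈ {1,…,n}. Let M, Z_1,…,Z_n be i.i.d. standard normal random variables, define X_i = √ρ·M + √(1−ρ)·Z_i for i = 1,…,n, and let R = {x ∈ ℝⁿ : x_1 ≤ x_2 ≤ ⋯ ≤ x_n}. Then E[X_k | X ∈ R] = √(1−ρ)·E[Z_{(k)}], where Z_{(k)} is the k-th order statistic of Z_1,…,Z_n. -/
open MeasureTheory ProbabilityTheory Real
open scoped ENNReal Nat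

/-- The `k`-th order statistic (0-indexed) of the tuple `z : Fin n → ℝ`:
the `(k+1)`-th smallest value among `z 0, …, z (n-1)`. -/
noncomputable def orderStat {n : ℕ} (z : Fin n → ℝ) (k : Fin n) : ℝ :=
  z (Tuple.sort z k)

section Aux

open Set

instance : NullSingletonClass (gaussianReal 0 1) :=
  ⟨fun x => gaussianReal_absolutelyContinuous 0 one_ne_zero (measure_singleton x)⟩

lemma integrable_id_stdGauss : Integrable (fun x : ℝ => x) (gaussianReal 0 1) := by
  rw [gaussianReal_of_var_ne_zero 0 one_ne_zero,
    integrable_withDensity_iff (measurable_gaussianPDF 0 1)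
      (Filter.Eventually.of_forall fun x => ENNReal.ofReal_lt_top)]
  have h : ∀ x : ℝ, x * (gaussianPDF 0 1 x).toReal
      = (Real.sqrt (2 * π))⁻¹ * (x * Real.exp (-(2:ℝ)⁻¹ * x ^ 2)) := by
    intro x
    rw [gaussianPDF, ENNReal.toReal_ofReal (gaussianPDFReal_nonneg 0 1 x), gaussianPDFReal]
    norm_num
    ring_nf
  simp only [h]
  exact (integrable_mul_exp_neg_mul_sq (by norm_num : (0:ℝ) < 2⁻¹)).const_mul _

lemma integral_id_stdGauss : ∫ x, x ∂(gaussianReal 0 1) = 0 := by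
  have hv : (NNReal.mk ((-1:ℝ)^2) (sq_nonneg _)) * 1 = 1 := by
    rw [mul_one]; exact NNReal.eq (by norm_num [NNReal.mk]; rfl)
  have hmap : Measure.map (fun x : ℝ => -1 * x) (gaussianReal 0 1) = gaussianReal 0 1 := by
    have h := gaussianReal_map_const_mul (μ := 0) (v := 1) (-1)
    rw [mul_zero, hv] at h
    exact h
  have h2 : ∫ x, x ∂(gaussianReal 0 1) = ∫ x, (-1 : ℝ) * x ∂(gaussianReal 0 1) := by
    conv_lhs => rw [← hmap]
    exact integral_map ((measurable_id.const_mul (-1 : ℝ)).aemeasurable)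
      measurable_id.aestronglyMeasurable
  simp only [neg_one_mul] at h2
  rw [integral_neg] at h2
  linarith

variable {n : ℕ}

noncomputable abbrev gaussPi (n : ℕ) : Measure (Fin n → ℝ) :=
  Measure.pi fun _ => gaussianReal 0 1

lemma measurePreserving_comp_perm (σ : Equiv.Perm (Fin n)) :
    MeasurePreserving (fun x : Fin n → ℝ => x ∘ σ) (gaussPi n) (gaussPi n) := by
  have hm : Measurable (fun x : Fin n → ℝ => x ∘ σ) :=
    measurable_pi_lambda _ fun i => measurable_pi_apply (σ i)
  refine ⟨hm, ?_⟩
  refine Eq.symm (?_ : Measure.pi (fun _ : Fin n => gaussianReal 0 1) = _)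
  refine Measure.pi_eq fun s hs => ?_
  rw [Measure.map_apply hm (MeasurableSet.univ_pi hs)]
  have hpre : (fun x : Fin n → ℝ => x ∘ σ) ⁻¹' Set.univ.pi s
      = Set.univ.pi fun j => s (σ.symm j) := by
    ext x
    simp only [Set.mem_preimage, Set.mem_pi, Set.mem_univ, forall_true_left, Function.comp]
    exact ⟨fun h j => by simpa using h (σ.symm j), fun h i => by simpa using h (σ i)⟩
  rw [hpre, Measure.pi_pi]
  exact Fintype.prod_equiv σ.symm _ _ fun j => rfl

/-- The measurable equivalence `x ↦ x ∘ σ`. -/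
def permArrowEquiv (σ : Equiv.Perm (Fin n)) : (Fin n → ℝ) ≃ᵐ (Fin n → ℝ) where
  toEquiv := Equiv.arrowCongr σ.symm (Equiv.refl ℝ)
  measurable_toFun := measurable_pi_lambda _ fun i => measurable_pi_apply _
  measurable_invFun := measurable_pi_lambda _ fun i => measurable_pi_apply _

lemma permArrowEquiv_apply (σ : Equiv.Perm (Fin n)) (x : Fin n → ℝ) :
    permArrowEquiv σ x = x ∘ σ := by
  funext i
  simp [permArrowEquiv, Equiv.arrowCongr]

lemma gaussPi_pair_null {i j : Fin n} (hij : j ≠ i) :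
    gaussPi n {x | x i = x j} = 0 := by
  classical
  set e := MeasurableEquiv.piEquivPiSubtypeProd (fun _ : Fin n => ℝ) (fun l => l ≠ i) with he
  have hmp : MeasurePreserving e (gaussPi n)
      ((Measure.pi fun _ : {l : Fin n // l ≠ i} => gaussianReal 0 1).prod
        (Measure.pi fun _ : {l : Fin n // ¬ l ≠ i} => gaussianReal 0 1)) :=
    measurePreserving_piEquivPiSubtypeProd (fun _ : Fin n => gaussianReal 0 1) (fun l => l ≠ i)
  have hs : MeasurableSet {x : Fin n → ℝ | x i = x j} :=
    measurableSet_eq_fun (β := ℝ) (f := fun x : Fin n → ℝ => x i)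
      (g := fun x : Fin n → ℝ => x j) (measurable_pi_apply i) (measurable_pi_apply j)
  have hset : e ⁻¹' (e.symm ⁻¹' {x : Fin n → ℝ | x i = x j}) = {x | x i = x j} := by
    ext x; simp
  have hkey := hmp.measure_preimage (s := e.symm ⁻¹' {x : Fin n → ℝ | x i = x j})
    (e.symm.measurable hs).nullMeasurableSet
  rw [hset] at hkey
  have hzero : ∀ f : {l : Fin n // l ≠ i} → ℝ,
      (Measure.pi fun _ : {l : Fin n // ¬ l ≠ i} => gaussianReal 0 1)
        (Prod.mk f ⁻¹' (e.symm ⁻¹' {x : Fin n → ℝ | x i = x j})) = 0 := by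
    intro f
    have hps : Prod.mk f ⁻¹' (e.symm ⁻¹' {x : Fin n → ℝ | x i = x j})
        = {g : {l : Fin n // ¬ l ≠ i} → ℝ | g ⟨i, by simp⟩ = f ⟨j, hij⟩} := by
      ext g
      simp only [Set.mem_preimage, Set.mem_setOf_eq, he,
        MeasurableEquiv.piEquivPiSubtypeProd_symm_apply]
      rw [dif_neg (by simp), dif_pos hij]
    rw [hps]
    exact Measure.pi_hyperplane _ _ _
  rw [hkey, Measure.prod_apply (e.symm.measurable hs)]
  exact (lintegral_congr hzero).trans lintegral_zero

lemma noninj_null : gaussPi n {x | ¬ Function.Injective x} = 0 := by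
  refine measure_mono_null (fun x hx => ?_)
    (measure_iUnion_null fun i : Fin n => measure_iUnion_null fun j : Fin n =>
      measure_iUnion_null fun hij : j ≠ i => gaussPi_pair_null hij)
  simp only [Function.Injective, not_forall] at hx
  obtain ⟨a, b, hab, hne⟩ := hx
  exact Set.mem_iUnion.2 ⟨a, Set.mem_iUnion.2 ⟨b,
    Set.mem_iUnion.2 ⟨fun h => hne h.symm, hab⟩⟩⟩

/-- The strict-ordering cells. -/
def Bset (n : ℕ) (σ : Equiv.Perm (Fin n)) : Set (Fin n → ℝ) := {x | StrictMono (x ∘ σ)}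

lemma measurable_Bset (σ : Equiv.Perm (Fin n)) : MeasurableSet (Bset n σ) := by
  have : Bset n σ = ⋂ (i : Fin n) (j : Fin n), {x | i < j → x (σ i) < x (σ j)} := by
    ext x
    simp only [Bset, Set.mem_setOf_eq, Set.mem_iInter]
    exact ⟨fun h i j hij => h hij, fun h a b hab => h a b hab⟩
  rw [this]
  refine MeasurableSet.iInter fun i => MeasurableSet.iInter fun j => ?_
  by_cases hij : i < j
  · simp only [hij, forall_true_left]
    exact measurableSet_lt (measurable_pi_apply _) (measurable_pi_apply _)
  · simp [hij]

lemma Bset_preimage (σ : Equiv.Perm (Fin n)) :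
    (fun x : Fin n → ℝ => x ∘ σ) ⁻¹' Bset n 1 = Bset n σ := by
  ext x
  simp [Bset]

lemma Bset_disjoint : Pairwise (Function.onFun Disjoint (Bset n)) := by
  intro σ τ hst
  rw [Function.onFun, Set.disjoint_left]
  intro x hxσ hxτ
  have hσ' : StrictMono (x ∘ σ) := hxσ
  have hτ' : StrictMono (x ∘ τ) := hxτ
  have h2 : x ∘ σ = x ∘ τ := Tuple.unique_monotone hσ'.monotone hτ'.monotone
  have hinj : Function.Injective x := by
    intro a b hab
    have h1 : (x ∘ σ) (σ.symm a) = (x ∘ σ) (σ.symm b) := by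
      simp only [Function.comp_apply, Equiv.apply_symm_apply]
      exact hab
    have h3 := hσ'.injective h1
    have h4 := congrArg σ h3
    simpa using h4
  exact hst (Equiv.ext fun i => hinj (congrFun h2 i))

lemma inj_subset_iUnion_Bset :
    {x : Fin n → ℝ | Function.Injective x} ⊆ ⋃ σ : Equiv.Perm (Fin n), Bset n σ := by
  intro x hx
  exact Set.mem_iUnion.2 ⟨Tuple.sort x,
    (Tuple.monotone_sort x).strictMono_of_injective (hx.comp (Equiv.injective _))⟩

lemma gaussPi_iUnion_Bset : gaussPi n (⋃ σ : Equiv.Perm (Fin n), Bset n σ) = 1 := by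
  refine le_antisymm prob_le_one ?_
  have huniv : (Set.univ : Set (Fin n → ℝ))
      ⊆ (⋃ σ : Equiv.Perm (Fin n), Bset n σ) ∪ {x | ¬ Function.Injective x} := by
    intro x _
    by_cases hx : Function.Injective x
    · exact Or.inl (inj_subset_iUnion_Bset hx)
    · exact Or.inr hx
  calc (1 : ℝ≥0∞) = gaussPi n Set.univ := measure_univ.symm
    _ ≤ gaussPi n ((⋃ σ : Equiv.Perm (Fin n), Bset n σ) ∪ {x | ¬ Function.Injective x}) :=
        measure_mono huniv
    _ ≤ gaussPi n (⋃ σ : Equiv.Perm (Fin n), Bset n σ) + gaussPi n {x | ¬ Function.Injective x} :=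
        measure_union_le _ _
    _ = gaussPi n (⋃ σ : Equiv.Perm (Fin n), Bset n σ) := by rw [noninj_null, add_zero]

lemma gaussPi_Bset_eq (σ : Equiv.Perm (Fin n)) :
    gaussPi n (Bset n σ) = gaussPi n (Bset n 1) := by
  rw [← Bset_preimage σ]
  exact (measurePreserving_comp_perm σ).measure_preimage (measurable_Bset 1).nullMeasurableSet

lemma gaussPi_Bone : gaussPi n (Bset n 1) = (n ! : ℝ≥0∞)⁻¹ := by
  have hsum : gaussPi n (⋃ σ : Equiv.Perm (Fin n), Bset n σ)
      = ∑' σ : Equiv.Perm (Fin n), gaussPi n (Bset n σ) :=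
    measure_iUnion Bset_disjoint fun σ => measurable_Bset σ
  rw [gaussPi_iUnion_Bset, tsum_fintype] at hsum
  have : ∑ σ : Equiv.Perm (Fin n), gaussPi n (Bset n σ)
      = (n ! : ℝ≥0∞) * gaussPi n (Bset n 1) := by
    rw [Finset.sum_congr rfl fun σ _ => gaussPi_Bset_eq σ, Finset.sum_const,
      Finset.card_univ, Fintype.card_perm, Fintype.card_fin, nsmul_eq_mul]
  rw [this] at hsum
  have hn0 : (n ! : ℝ≥0∞) ≠ 0 := by
    simp [Nat.factorial_ne_zero]
  have hnt : (n ! : ℝ≥0∞) ≠ ∞ := by simp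
  exact ENNReal.eq_inv_of_mul_eq_one_left (by rw [mul_comm]; exact hsum.symm)

lemma measurableSet_monoSet : MeasurableSet {x : Fin n → ℝ | Monotone x} := by
  have : {x : Fin n → ℝ | Monotone x} = ⋂ (i : Fin n) (j : Fin n), {x | i ≤ j → x i ≤ x j} := by
    ext x
    simp only [Set.mem_setOf_eq, Set.mem_iInter]
    exact ⟨fun h i j hij => h hij, fun h a b hab => h a b hab⟩
  rw [this]
  refine MeasurableSet.iInter fun i => MeasurableSet.iInter fun j => ?_
  by_cases hij : i ≤ j
  · simp only [hij, forall_true_left]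
    exact measurableSet_le (measurable_pi_apply _) (measurable_pi_apply _)
  · simp [hij]

lemma monoSet_ae_eq_Bone :
    {x : Fin n → ℝ | Monotone x} =ᵐ[gaussPi n] Bset n 1 := by
  rw [MeasureTheory.ae_eq_set]
  constructor
  · refine measure_mono_null (fun x hx => ?_) noninj_null
    obtain ⟨h1, h2⟩ := hx
    simp only [Set.mem_setOf_eq] at h1 ⊢
    intro hinj
    exact h2 (by simpa [Bset] using h1.strictMono_of_injective hinj)
  · have : Bset n 1 \ {x : Fin n → ℝ | Monotone x} = ∅ := by
      rw [Set.diff_eq_empty]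
      intro x hx
      simpa [Bset] using (show StrictMono (x ∘ (1 : Equiv.Perm (Fin n))) from hx).monotone
    rw [this]
    simp

lemma core_measure : gaussPi n {x | Monotone x} = (n ! : ℝ≥0∞)⁻¹ := by
  rw [measure_congr monoSet_ae_eq_Bone, gaussPi_Bone]

lemma measurableSet_sortEq (σ : Equiv.Perm (Fin n)) :
    MeasurableSet {x : Fin n → ℝ | Tuple.sort x = σ} := by
  have hchar : {x : Fin n → ℝ | Tuple.sort x = σ}
      = {x : Fin n → ℝ | Monotone (x ∘ σ)}
        ∩ ⋂ (i : Fin n) (j : Fin n), {x | i < j → x (σ i) = x (σ j) → σ i < σ j} := by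
    ext x
    rw [Set.mem_setOf_eq, eq_comm, Tuple.eq_sort_iff]
    simp only [Set.mem_inter_iff, Set.mem_setOf_eq, Set.mem_iInter]
  rw [hchar]
  refine MeasurableSet.inter ?_ ?_
  · have : {x : Fin n → ℝ | Monotone (x ∘ σ)}
        = ⋂ (i : Fin n) (j : Fin n), {x | i ≤ j → x (σ i) ≤ x (σ j)} := by
      ext x
      simp only [Set.mem_setOf_eq, Set.mem_iInter]
      exact ⟨fun h i j hij => h hij, fun h a b hab => h a b hab⟩
    rw [this]
    refine MeasurableSet.iInter fun i => MeasurableSet.iInter fun j => ?_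
    by_cases hij : i ≤ j
    · simp only [hij, forall_true_left]
      exact measurableSet_le (measurable_pi_apply _) (measurable_pi_apply _)
    · simp [hij]
  · refine MeasurableSet.iInter fun i => MeasurableSet.iInter fun j => ?_
    by_cases hij : i < j
    · by_cases hσ : σ i < σ j
      · simp [hij, hσ]
      · have : {x : Fin n → ℝ | i < j → x (σ i) = x (σ j) → σ i < σ j}
            = {x : Fin n → ℝ | x (σ i) = x (σ j)}ᶜ := by
          ext x
          simp [hij, hσ]
        rw [this]
        exact (measurableSet_eq_fun (β := ℝ) (f := fun x : Fin n → ℝ => x (σ i))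
          (g := fun x : Fin n → ℝ => x (σ j))
          (measurable_pi_apply _) (measurable_pi_apply _)).compl
    · simp [hij]

lemma measurable_orderStat (k : Fin n) :
    Measurable fun x : Fin n → ℝ => orderStat x k := by
  classical
  have hrep : (fun x : Fin n → ℝ => orderStat x k)
      = fun x => ∑ σ : Equiv.Perm (Fin n),
          Set.indicator {y : Fin n → ℝ | Tuple.sort y = σ} (fun y => y (σ k)) x := by
    funext x
    rw [Finset.sum_eq_single (Tuple.sort x)]
    · rw [Set.indicator_of_mem (by simp : x ∈ {y : Fin n → ℝ | Tuple.sort y = Tuple.sort x})]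
      rfl
    · intro σ _ hσ
      apply Set.indicator_of_notMem
      intro h
      simp only [Set.mem_setOf_eq] at h
      exact hσ h.symm
    · intro h
      exact absurd (Finset.mem_univ _) h
  rw [hrep]
  exact Finset.measurable_sum _ fun σ _ =>
    (measurable_pi_apply (σ k)).indicator (measurableSet_sortEq σ)

lemma orderStat_comp_perm (x : Fin n → ℝ) (σ : Equiv.Perm (Fin n)) (k : Fin n) :
    orderStat (x ∘ σ) k = orderStat x k :=
  congrFun (Tuple.comp_perm_comp_sort_eq_comp_sort (f := x) (σ := σ)) k

lemma map_eval_gaussPi (i : Fin n) :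
    Measure.map (fun x : Fin n → ℝ => x i) (gaussPi n) = gaussianReal 0 1 := by
  ext s hs
  rw [Measure.map_apply (measurable_pi_apply i) hs]
  have hpre : (fun x : Fin n → ℝ => x i) ⁻¹' s
      = Set.univ.pi (fun j => if j = i then s else Set.univ) := by
    ext x
    simp only [Set.mem_preimage, Set.mem_pi, Set.mem_univ, forall_true_left]
    constructor
    · intro h j
      by_cases hj : j = i <;> simp [hj, h]
    · intro h
      simpa using h i
  rw [hpre, Measure.pi_pi]
  simp [apply_ite (gaussianReal 0 1), Finset.prod_ite_eq']

lemma integrable_eval_gaussPi (i : Fin n) :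
    Integrable (fun x : Fin n → ℝ => x i) (gaussPi n) := by
  have h := integrable_id_stdGauss
  rw [← map_eval_gaussPi i] at h
  exact (integrable_map_measure aestronglyMeasurable_id
    (measurable_pi_apply i).aemeasurable).mp h

lemma integrable_orderStat (k : Fin n) :
    Integrable (fun x : Fin n → ℝ => orderStat x k) (gaussPi n) := by
  refine Integrable.mono' (g := fun x => ∑ i : Fin n, |x i|)
    (integrable_finset_sum _ fun i _ => (integrable_eval_gaussPi i).abs)
    (measurable_orderStat k).aestronglyMeasurable
    (Filter.Eventually.of_forall fun x => ?_)
  rw [Real.norm_eq_abs]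
  exact Finset.single_le_sum (f := fun i => |x i|) (fun i _ => abs_nonneg _)
    (Finset.mem_univ (Tuple.sort x k))

lemma integral_orderStat_eq (k : Fin n) :
    ∫ x, orderStat x k ∂gaussPi n
      = (n ! : ℝ) * ∫ x in Bset n 1, orderStat x k ∂gaussPi n := by
  have huniv_ae : (Set.univ : Set (Fin n → ℝ)) =ᵐ[gaussPi n]
      ⋃ σ : Equiv.Perm (Fin n), Bset n σ := by
    rw [MeasureTheory.ae_eq_set]
    constructor
    · refine measure_mono_null (fun x hx => ?_) noninj_null
      intro hinj
      exact hx.2 (inj_subset_iUnion_Bset hinj)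
    · simp
  have heach : ∀ σ : Equiv.Perm (Fin n),
      ∫ x in Bset n σ, orderStat x k ∂gaussPi n
        = ∫ x in Bset n 1, orderStat x k ∂gaussPi n := by
    intro σ
    have hemb : MeasurableEmbedding (fun x : Fin n → ℝ => x ∘ σ) := by
      have h0 : (fun x : Fin n → ℝ => x ∘ σ) = ⇑(permArrowEquiv σ) := by
        funext x; rw [permArrowEquiv_apply]
      rw [h0]
      exact (permArrowEquiv σ).measurableEmbedding
    have h := (measurePreserving_comp_perm σ).setIntegral_preimage_emb hemb
      (fun x => orderStat x k) (Bset n 1)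
    rw [Bset_preimage] at h
    rw [← h]
    exact setIntegral_congr_fun (measurable_Bset σ) fun x _ => (orderStat_comp_perm x σ k).symm
  calc ∫ x, orderStat x k ∂gaussPi n
      = ∫ x in Set.univ, orderStat x k ∂gaussPi n := setIntegral_univ.symm
    _ = ∫ x in ⋃ σ : Equiv.Perm (Fin n), Bset n σ, orderStat x k ∂gaussPi n :=
        setIntegral_congr_set huniv_ae
    _ = ∑ σ : Equiv.Perm (Fin n), ∫ x in Bset n σ, orderStat x k ∂gaussPi n :=
        integral_iUnion_fintype (fun σ => measurable_Bset σ) Bset_disjoint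
          (fun σ => (integrable_orderStat k).integrableOn)
    _ = (n ! : ℝ) * ∫ x in Bset n 1, orderStat x k ∂gaussPi n := by
        rw [Finset.sum_congr rfl fun σ _ => heach σ, Finset.sum_const,
          Finset.card_univ, Fintype.card_perm, Fintype.card_fin, nsmul_eq_mul]

lemma core_integral (k : Fin n) :
    ∫ x in {x : Fin n → ℝ | Monotone x}, x k ∂gaussPi n
      = (n ! : ℝ)⁻¹ * ∫ x, orderStat x k ∂gaussPi n := by
  have h1 : ∫ x in {x : Fin n → ℝ | Monotone x}, x k ∂gaussPi n
      = ∫ x in {x : Fin n → ℝ | Monotone x}, orderStat x k ∂gaussPi n := by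
    refine setIntegral_congr_fun measurableSet_monoSet fun x hx => ?_
    have hsort : Tuple.sort x = Equiv.refl (Fin n) :=
      Tuple.sort_eq_refl_iff_monotone.mpr hx
    rw [orderStat, hsort]
    rfl
  rw [h1, setIntegral_congr_set monoSet_ae_eq_Bone, integral_orderStat_eq k]
  have hn0 : (n ! : ℝ) ≠ 0 := Nat.cast_ne_zero.mpr (Nat.factorial_ne_zero n)
  field_simp

lemma iid_map_pi {Ω : Type*} [MeasureSpace Ω] {m : ℕ} (W : Fin m → Ω → ℝ)
    (hmeas : ∀ i, Measurable (W i))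
    (hindep : iIndepFun W ℙ)
    (hdist : ∀ i, Measure.map (W i) ℙ = gaussianReal 0 1) :
    Measure.map (fun ω i => W i ω) ℙ = Measure.pi fun _ : Fin m => gaussianReal 0 1 := by
  refine Eq.symm (?_ : Measure.pi (fun _ : Fin m => gaussianReal 0 1) = _)
  refine Measure.pi_eq fun s hs => ?_
  rw [Measure.map_apply (measurable_pi_lambda _ hmeas) (MeasurableSet.univ_pi hs)]
  have hpre : (fun ω i => W i ω) ⁻¹' Set.univ.pi s = ⋂ i ∈ Finset.univ, W i ⁻¹' s i := by
    ext ω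
    simp [Set.mem_pi]
  rw [hpre, (iIndepFun_iff_measure_inter_preimage_eq_mul.mp hindep) Finset.univ
    (fun i _ => hs i)]
  exact Finset.prod_congr rfl fun i _ => by
    rw [← hdist i, Measure.map_apply (hmeas i) (hs i)]

end Aux

/-- One-factor model: `M, Z_1, …, Z_n` i.i.d. standard normal,
`X i = √ρ·M + √(1-ρ)·Z i` (indices `0,…,n-1` representing `1,…,n`), and
`R = {x : x_1 ≤ ⋯ ≤ x_n}`.  Then `E[X_k | X ∈ R] = √(1-ρ)·E[Z_(k)]`. -/
theorem stmt5 {Ω : Type*} [MeasureSpace Ω] (hP : IsProbabilityMeasure (ℙ : Measure Ω))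
    (n : ℕ) (hn : 1 ≤ n) (ρ : ℝ) (hρ0 : 0 ≤ ρ) (hρ1 : ρ < 1)
    (M : Ω → ℝ) (Z : Fin n → Ω → ℝ)
    (W : Fin (n + 1) → Ω → ℝ) (hW : W = Fin.cons M Z)
    (hmeas : ∀ i, Measurable (W i))
    (hindep : iIndepFun W ℙ)
    (hdist : ∀ i, Measure.map (W i) ℙ = gaussianReal 0 1)
    (X : Fin n → Ω → ℝ)
    (hX : ∀ i ω, X i ω = Real.sqrt ρ * M ω + Real.sqrt (1 - ρ) * Z i ω)
    (k : Fin n) :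
    ∫ ω, X k ω ∂(ℙ[|{ω | Monotone fun i => X i ω}])
      = Real.sqrt (1 - ρ) * ∫ ω, orderStat (fun i => Z i ω) k ∂ℙ := by
  classical
  have hc : (0:ℝ) < Real.sqrt (1 - ρ) := Real.sqrt_pos.mpr (by linarith)
  set c := Real.sqrt (1 - ρ) with hcdef
  set a := Real.sqrt ρ with hadef
  set V : Ω → (Fin n → ℝ) := fun ω i => Z i ω with hVdef
  have hMmeas : Measurable M := by
    have := hmeas 0; rwa [hW, Fin.cons_zero] at this
  have hZmeas : ∀ i, Measurable (Z i) := fun i => by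
    have := hmeas i.succ; rwa [hW, Fin.cons_succ] at this
  have hVmeas : Measurable V := measurable_pi_lambda _ hZmeas
  have hpairmeas : Measurable (fun ω => (M ω, V ω)) := hMmeas.prodMk hVmeas
  have hdistM : Measure.map M ℙ = gaussianReal 0 1 := by
    have := hdist 0; rwa [hW, Fin.cons_zero] at this
  have hdistZ : ∀ i, Measure.map (Z i) ℙ = gaussianReal 0 1 := fun i => by
    have := hdist i.succ; rwa [hW, Fin.cons_succ] at this
  have hU : Measure.map (fun ω i => W i ω) ℙ
      = Measure.pi fun _ : Fin (n+1) => gaussianReal 0 1 :=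
    iid_map_pi W hmeas hindep hdist
  have hpair : Measure.map (fun ω => (M ω, V ω)) ℙ
      = (gaussianReal 0 1).prod (gaussPi n) := by
    have he : MeasurePreserving (MeasurableEquiv.piFinSuccAbove (fun _ : Fin (n+1) => ℝ) 0)
        (Measure.pi fun _ : Fin (n+1) => gaussianReal 0 1)
        ((gaussianReal 0 1).prod (gaussPi n)) :=
      measurePreserving_piFinSuccAbove (fun _ : Fin (n+1) => gaussianReal 0 1) 0
    have hcomp : (fun ω => (M ω, V ω))
        = ⇑(MeasurableEquiv.piFinSuccAbove (fun _ : Fin (n+1) => ℝ) 0)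
            ∘ (fun ω i => W i ω) := by
      funext ω
      show (M ω, V ω) = (W 0 ω, fun j => W (Fin.succAbove 0 j) ω)
      rw [hW]
      refine Prod.ext ?_ ?_
      · simp
      · funext j
        simp [hVdef]
    rw [hcomp, ← Measure.map_map (MeasurableEquiv.measurable _)
      (measurable_pi_lambda _ hmeas), hU, he.map_eq]
  have hVmap : Measure.map V ℙ = gaussPi n := by
    have hVsnd : V = Prod.snd ∘ (fun ω => (M ω, V ω)) := rfl
    rw [hVsnd, ← Measure.map_map measurable_snd hpairmeas, hpair, Measure.map_snd_prod,
      measure_univ, one_smul]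
  set Aev : Set Ω := {ω | Monotone fun i => X i ω} with hAevdef
  have hAeq : Aev = (fun ω => (M ω, V ω)) ⁻¹' (Set.univ ×ˢ {x : Fin n → ℝ | Monotone x}) := by
    ext ω
    simp only [hAevdef, Set.mem_setOf_eq, Set.mem_preimage, Set.mem_prod, Set.mem_univ,
      true_and]
    constructor
    · intro h i j hij
      show Z i ω ≤ Z j ω
      have h2 : X i ω ≤ X j ω := h hij
      rw [hX i ω, hX j ω] at h2
      have h3 : c * Z i ω ≤ c * Z j ω := by linarith
      exact le_of_mul_le_mul_left h3 hc
    · intro h i j hij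
      have h2 : Z i ω ≤ Z j ω := h hij
      have h3 : c * Z i ω ≤ c * Z j ω := mul_le_mul_of_nonneg_left h2 hc.le
      show X i ω ≤ X j ω
      rw [hX i ω, hX j ω]
      linarith
  have hprodmeas : MeasurableSet (Set.univ ×ˢ {x : Fin n → ℝ | Monotone x} :
      Set (ℝ × (Fin n → ℝ))) := MeasurableSet.univ.prod measurableSet_monoSet
  have hAevmeas : MeasurableSet Aev := hAeq ▸ hpairmeas hprodmeas
  have hPA : ℙ Aev = (n ! : ℝ≥0∞)⁻¹ := by
    rw [hAeq, ← Measure.map_apply hpairmeas hprodmeas, hpair, Measure.prod_prod,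
      measure_univ, one_mul, core_measure]
  have hMint : Integrable M ℙ := by
    have h := integrable_id_stdGauss
    rw [← hdistM] at h
    exact (integrable_map_measure aestronglyMeasurable_id hMmeas.aemeasurable).mp h
  have hZint : Integrable (Z k) ℙ := by
    have h := integrable_id_stdGauss
    rw [← hdistZ k] at h
    exact (integrable_map_measure aestronglyMeasurable_id (hZmeas k).aemeasurable).mp h
  have hIM : ∫ ω in Aev, M ω ∂ℙ = 0 := by
    have hfmeas : AEStronglyMeasurable (fun p : ℝ × (Fin n → ℝ) => p.1)
        (Measure.map (fun ω => (M ω, V ω)) ℙ) := by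
      rw [hpair]; exact measurable_fst.aestronglyMeasurable
    have h1 : ∫ ω in Aev, M ω ∂ℙ = ∫ p in Set.univ ×ˢ {x : Fin n → ℝ | Monotone x},
        p.1 ∂((gaussianReal 0 1).prod (gaussPi n)) := by
      rw [← hpair, setIntegral_map hprodmeas hfmeas hpairmeas.aemeasurable, ← hAeq]
    rw [h1, ← Measure.prod_restrict, Measure.restrict_univ]
    have h2 : ∫ p : ℝ × (Fin n → ℝ), p.1
        ∂((gaussianReal 0 1).prod ((gaussPi n).restrict {x | Monotone x}))
        = (∫ x : ℝ, x ∂(gaussianReal 0 1))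
          * ∫ x : Fin n → ℝ, (1:ℝ) ∂((gaussPi n).restrict {x | Monotone x}) := by
      rw [← integral_prod_mul (f := fun x : ℝ => x) (g := fun _ : Fin n → ℝ => (1:ℝ))]
      simp
    rw [h2, integral_id_stdGauss, zero_mul]
  have hIZ : ∫ ω in Aev, Z k ω ∂ℙ = (n ! : ℝ)⁻¹ * ∫ x, orderStat x k ∂gaussPi n := by
    have hfmeas : AEStronglyMeasurable (fun p : ℝ × (Fin n → ℝ) => p.2 k)
        (Measure.map (fun ω => (M ω, V ω)) ℙ) := by
      rw [hpair]
      exact ((measurable_pi_apply k).comp measurable_snd).aestronglyMeasurable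
    have h1 : ∫ ω in Aev, Z k ω ∂ℙ = ∫ p in Set.univ ×ˢ {x : Fin n → ℝ | Monotone x},
        p.2 k ∂((gaussianReal 0 1).prod (gaussPi n)) := by
      rw [← hpair, setIntegral_map hprodmeas hfmeas hpairmeas.aemeasurable, ← hAeq]
    rw [h1, ← Measure.prod_restrict, Measure.restrict_univ]
    have h2 : ∫ p : ℝ × (Fin n → ℝ), p.2 k
        ∂((gaussianReal 0 1).prod ((gaussPi n).restrict {x | Monotone x}))
        = (∫ _ : ℝ, (1:ℝ) ∂(gaussianReal 0 1))
          * ∫ x in {x : Fin n → ℝ | Monotone x}, x k ∂gaussPi n := by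
      rw [← integral_prod_mul (f := fun _ : ℝ => (1:ℝ)) (g := fun x : Fin n → ℝ => x k)]
      simp
    rw [h2, core_integral k]
    simp
  have hRHS : ∫ x, orderStat x k ∂gaussPi n
      = ∫ ω, orderStat (fun i => Z i ω) k ∂ℙ := by
    rw [← hVmap, integral_map hVmeas.aemeasurable
      (by rw [hVmap]; exact (measurable_orderStat k).aestronglyMeasurable)]
  have hXint : ∫ ω in Aev, X k ω ∂ℙ
      = a * ∫ ω in Aev, M ω ∂ℙ + c * ∫ ω in Aev, Z k ω ∂ℙ := by
    have hcongr : ∫ ω in Aev, X k ω ∂ℙ = ∫ ω in Aev, (a * M ω + c * Z k ω) ∂ℙ :=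
      integral_congr_ae (Filter.Eventually.of_forall fun ω => hX k ω)
    rw [hcongr, integral_add ((hMint.const_mul a).integrableOn)
      ((hZint.const_mul c).integrableOn), integral_const_mul, integral_const_mul]
  have hn0 : (n ! : ℝ) ≠ 0 := Nat.cast_ne_zero.mpr (Nat.factorial_ne_zero n)
  simp only [ProbabilityTheory.cond]
  rw [integral_smul_measure, hPA, inv_inv, hXint, hIM, hIZ, ← hRHS]
  rw [ENNReal.toReal_natCast]
  rw [smul_eq_mul]
  field_simp
  ring
end

section
/- Fix n ≥ 1, ρ ∈ [0,1), real numbers μ_1,…,μ_n, and positive reals σ_1,…,σ_n. Let M, Z_1,…,Z_n be i.i.d. standard normal random variables and define X_i = σ_i(√ρ·M + √(1−ρ)·Z_i) + μ_i. Let φ be the standard normal density, and for m ∈ ℝ let φ_i(m,·) be the density of N(μ_i + σ_i√ρ·m, σ_i²(1−ρ)). Define b_0(m,x) = 1 and, for i = 1,…,n−1, b_i(m,x) = ∫_{−∞}^{x} b_{i−1}(m,t)·φ_i(m,t) dt. Then P(X_1 ≤ X_2 ≤ ⋯ ≤ X_n) = ∫_{−∞}^{∞} ∫_{−∞}^{∞}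 φ(m)·b_{n−1}(m,x)·φ_n(m,x) dx dm. -/
open MeasureTheory ProbabilityTheory Real
open scoped ENNReal NNReal

lemma measurableSet_monotone' {α : Type*} [MeasurableSpace α] {k : ℕ} (F : Fin k → α → ℝ)
    (hF : ∀ i, Measurable (F i)) : MeasurableSet {w | Monotone fun i => F i w} := by
  have h : {w | Monotone fun i => F i w} =
      ⋂ (i : Fin k) (j : Fin k) (_ : i ≤ j), {w | F i w ≤ F j w} := by
    ext w
    simp only [Set.mem_setOf_eq, Set.mem_iInter, Monotone]
  rw [h]
  exact MeasurableSet.iInter fun i => MeasurableSet.iInter fun j => MeasurableSet.iInter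
    fun _ => measurableSet_le (hF i) (hF j)

lemma monotone_snoc_iff' {k : ℕ} (z : Fin k → ℝ) (t : ℝ) :
    Monotone (Fin.snoc z t : Fin (k+1) → ℝ) ↔ Monotone z ∧ ∀ j, z j ≤ t := by
  constructor
  · intro h
    refine ⟨fun i j hij => ?_, fun j => ?_⟩
    · have := h (show (i.castSucc : Fin (k+1)) ≤ j.castSucc by simpa using hij)
      simpa using this
    · have := h (Fin.le_last j.castSucc)
      simpa using this
  · rintro ⟨hz, hzt⟩ i j hij
    induction j using Fin.lastCases with
    | last =>
      induction i using Fin.lastCases with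
      | last => exact le_refl _
      | cast i => simpa using hzt i
    | cast j =>
      induction i using Fin.lastCases with
      | last => exact absurd hij (not_le.mpr (Fin.castSucc_lt_last j))
      | cast i =>
        have : i ≤ j := by simpa using hij
        simpa using hz this

lemma forall_snoc_le_iff' {k : ℕ} (z : Fin k → ℝ) (t x : ℝ) :
    (∀ i : Fin (k+1), (Fin.snoc z t : Fin (k+1) → ℝ) i ≤ x) ↔ (∀ j, z j ≤ x) ∧ t ≤ x := by
  constructor
  · intro h
    exact ⟨fun j => by simpa using h j.castSucc, by simpa using h (Fin.last k)⟩
  · rintro ⟨h1, h2⟩ i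
    induction i using Fin.lastCases with
    | last => simpa
    | cast i => simpa using h1 i

lemma measure_eq_prod' {α β : Type*} [MeasurableSpace α] [MeasurableSpace β]
    {μ : Measure α} {ν : Measure β} (e : α ≃ᵐ β) (h : MeasurePreserving e μ ν)
    {S : Set α} (hS : MeasurableSet S) : μ S = ν (e.symm ⁻¹' S) := by
  rw [← h.map_eq, Measure.map_apply h.measurable (e.symm.measurable hS)]
  congr 1
  ext w
  simp

lemma normalPDF_eq_gaussianPDFReal' (a : ℝ) (v : ℝ≥0) (x : ℝ) :
    (Real.sqrt (2 * Real.pi * v))⁻¹ * Real.exp (-((x - a) ^ 2) / (2 * v)) = gaussianPDFReal a v x := rfl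

noncomputable def bG' (a : ℕ → ℝ) (v : ℕ → ℝ≥0) : ℕ → ℝ → ℝ
  | 0, _ => 1
  | k+1, x => ∫ t in Set.Iic x, bG' a v k t * gaussianPDFReal (a k) (v k) t

lemma bG_main' (a : ℕ → ℝ) (v : ℕ → ℝ≥0) (hv : ∀ i, v i ≠ 0) : ∀ k : ℕ,
    Measurable (bG' a v k) ∧ (∀ x, 0 ≤ bG' a v k x) ∧
    ∀ x, Measure.pi (fun i : Fin k => gaussianReal (a i.val) (v i.val))
        {y | Monotone y ∧ ∀ i, y i ≤ x} = ENNReal.ofReal (bG' a v k x) := by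
  intro k
  induction k with
  | zero =>
    refine ⟨measurable_const, fun _ => zero_le_one, fun x => ?_⟩
    have h : {y : Fin 0 → ℝ | Monotone y ∧ ∀ i, y i ≤ x} = Set.univ := by
      ext y
      simp only [Set.mem_setOf_eq, Set.mem_univ, iff_true]
      exact ⟨Subsingleton.monotone y, fun i => i.elim0⟩
    rw [h]
    simp [bG']
  | succ k ih =>
    obtain ⟨hbmeas, hbpos, hmeq⟩ := ih
    have hble : ∀ x, bG' a v k x ≤ 1 := by
      intro x
      have h1 := hmeq x
      have h2 : ENNReal.ofReal (bG' a v k x) ≤ 1 := h1 ▸ prob_le_one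
      exact ENNReal.ofReal_le_one.mp h2
    have hgnn : ∀ t, 0 ≤ gaussianPDFReal (a k) (v k) t := fun t => gaussianPDFReal_nonneg _ _ _
    have hint : Integrable (fun t => bG' a v k t * gaussianPDFReal (a k) (v k) t) := by
      refine (integrable_gaussianPDFReal (a k) (v k)).mono
        ((hbmeas.mul (measurable_gaussianPDFReal _ _)).aestronglyMeasurable)
        (Filter.Eventually.of_forall fun t => ?_)
      rw [Real.norm_eq_abs, Real.norm_eq_abs,
        abs_of_nonneg (mul_nonneg (hbpos t) (hgnn t)), abs_of_nonneg (hgnn t)]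
      exact mul_le_of_le_one_left (hgnn t) (hble t)
    have hpos' : ∀ x, 0 ≤ bG' a v (k+1) x := by
      intro x
      show (0:ℝ) ≤ ∫ t in Set.Iic x, bG' a v k t * gaussianPDFReal (a k) (v k) t
      exact setIntegral_nonneg measurableSet_Iic fun t _ => mul_nonneg (hbpos t) (hgnn t)
    have hmono : Monotone (bG' a v (k+1)) := by
      intro x y hxy
      show (∫ t in Set.Iic x, bG' a v k t * gaussianPDFReal (a k) (v k) t)
        ≤ ∫ t in Set.Iic y, bG' a v k t * gaussianPDFReal (a k) (v k) t
      exact setIntegral_mono_set hint.integrableOn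
        (Filter.Eventually.of_forall fun t => mul_nonneg (hbpos t) (hgnn t))
        ((Set.Iic_subset_Iic.mpr hxy).eventuallyLE)
    refine ⟨hmono.measurable, hpos', fun x => ?_⟩
    set S : Set (Fin (k+1) → ℝ) := {y | Monotone y ∧ ∀ i, y i ≤ x} with hS
    have hSmeas : MeasurableSet S := by
      have h : S = {y : Fin (k+1) → ℝ | Monotone y} ∩ ⋂ i, {y | y i ≤ x} := by
        ext y; simp [hS, Set.mem_iInter]
      rw [h]
      exact (measurableSet_monotone' _ (fun i => measurable_pi_apply i)).inter
        (MeasurableSet.iInter fun i => measurableSet_le (measurable_pi_apply i) measurable_const)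
    set e := MeasurableEquiv.piFinSuccAbove (fun _ : Fin (k+1) => ℝ) (Fin.last k) with he
    have hMP := measurePreserving_piFinSuccAbove
      (fun i : Fin (k+1) => gaussianReal (a i.val) (v i.val)) (Fin.last k)
    have hz : ∀ (t : ℝ) (z : Fin k → ℝ), e.symm (t, z) = Fin.snoc z t := by
      intro t z
      show (Fin.insertNthEquiv (fun _ => ℝ) (Fin.last k)) (t, z) = Fin.snoc z t
      simp [Fin.snocEquiv]
    have hrest : (fun j : Fin k =>
        gaussianReal (a ((Fin.last k).succAbove j).val) (v ((Fin.last k).succAbove j).val))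
        = fun j : Fin k => gaussianReal (a j.val) (v j.val) := by
      funext j
      simp [Fin.succAbove_last]
    have hslice : ∀ t : ℝ,
        (Measure.pi fun j : Fin k =>
          gaussianReal (a ((Fin.last k).succAbove j).val) (v ((Fin.last k).succAbove j).val))
            (Prod.mk t ⁻¹' (e.symm ⁻¹' S))
          = Set.indicator (Set.Iic x) (fun t => ENNReal.ofReal (bG' a v k t)) t := by
      intro t
      have hset : Prod.mk t ⁻¹' (e.symm ⁻¹' S)
          = if t ≤ x then {z : Fin k → ℝ | Monotone z ∧ ∀ j, z j ≤ t} else ∅ := by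
        ext z
        simp only [Set.mem_preimage, hz, hS, Set.mem_setOf_eq]
        by_cases htx : t ≤ x
        · rw [if_pos htx]
          simp only [Set.mem_setOf_eq]
          constructor
          · rintro ⟨h1, _⟩
            exact (monotone_snoc_iff' z t).mp h1
          · rintro ⟨hz1, hz2⟩
            exact ⟨(monotone_snoc_iff' z t).mpr ⟨hz1, hz2⟩,
              (forall_snoc_le_iff' z t x).mpr ⟨fun j => le_trans (hz2 j) htx, htx⟩⟩
        · rw [if_neg htx]
          simp only [Set.mem_empty_iff_false, iff_false]
          rintro ⟨-, h2⟩
          exact htx ((forall_snoc_le_iff' z t x).mp h2).2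
      rw [hset]
      by_cases htx : t ≤ x
      · rw [if_pos htx, Set.indicator_of_mem (show t ∈ Set.Iic x from htx), hrest, hmeq t]
      · rw [if_neg htx, Set.indicator_of_notMem (show t ∉ Set.Iic x from htx), measure_empty]
    have hstep := measure_eq_prod' e hMP hSmeas
    rw [hstep, Measure.prod_apply (e.symm.measurable hSmeas)]
    rw [lintegral_congr hslice]
    rw [lintegral_indicator measurableSet_Iic _]
    simp only [Fin.val_last]
    rw [gaussianReal_of_var_ne_zero _ (hv k), restrict_withDensity measurableSet_Iic,
      lintegral_withDensity_eq_lintegral_mul _ (measurable_gaussianPDF _ _)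
        hbmeas.ennreal_ofReal]
    have h3 : ∀ t, (gaussianPDF (a k) (v k) * fun t => ENNReal.ofReal (bG' a v k t)) t
        = ENNReal.ofReal (bG' a v k t * gaussianPDFReal (a k) (v k) t) := by
      intro t
      simp only [Pi.mul_apply, gaussianPDF]
      rw [mul_comm, ← ENNReal.ofReal_mul (hbpos t)]
    rw [lintegral_congr h3,
      ← ofReal_integral_eq_lintegral_ofReal hint.integrableOn
        (ae_of_all _ fun t => mul_nonneg (hbpos t) (hgnn t))]
    rfl

lemma bG_final' (a : ℕ → ℝ) (v : ℕ → ℝ≥0) (hv : ∀ i, v i ≠ 0) (k : ℕ) :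
    Measure.pi (fun i : Fin (k+1) => gaussianReal (a i.val) (v i.val)) {y | Monotone y}
      = ENNReal.ofReal (∫ t, bG' a v k t * gaussianPDFReal (a k) (v k) t) := by
  obtain ⟨hbmeas, hbpos, hmeq⟩ := bG_main' a v hv k
  have hble : ∀ x, bG' a v k x ≤ 1 := by
    intro x
    have h1 := hmeq x
    have h2 : ENNReal.ofReal (bG' a v k x) ≤ 1 := h1 ▸ prob_le_one
    exact ENNReal.ofReal_le_one.mp h2
  have hgnn : ∀ t, 0 ≤ gaussianPDFReal (a k) (v k) t := fun t => gaussianPDFReal_nonneg _ _ _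
  have hint : Integrable (fun t => bG' a v k t * gaussianPDFReal (a k) (v k) t) := by
    refine (integrable_gaussianPDFReal (a k) (v k)).mono
      ((hbmeas.mul (measurable_gaussianPDFReal _ _)).aestronglyMeasurable)
      (Filter.Eventually.of_forall fun t => ?_)
    rw [Real.norm_eq_abs, Real.norm_eq_abs,
      abs_of_nonneg (mul_nonneg (hbpos t) (hgnn t)), abs_of_nonneg (hgnn t)]
    exact mul_le_of_le_one_left (hgnn t) (hble t)
  set S : Set (Fin (k+1) → ℝ) := {y | Monotone y} with hS
  have hSmeas : MeasurableSet S := measurableSet_monotone' _ (fun i => measurable_pi_apply i)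
  set e := MeasurableEquiv.piFinSuccAbove (fun _ : Fin (k+1) => ℝ) (Fin.last k) with he
  have hMP := measurePreserving_piFinSuccAbove
    (fun i : Fin (k+1) => gaussianReal (a i.val) (v i.val)) (Fin.last k)
  have hz : ∀ (t : ℝ) (z : Fin k → ℝ), e.symm (t, z) = Fin.snoc z t := by
    intro t z
    show (Fin.insertNthEquiv (fun _ => ℝ) (Fin.last k)) (t, z) = Fin.snoc z t
    simp [Fin.snocEquiv]
  have hrest : (fun j : Fin k =>
      gaussianReal (a ((Fin.last k).succAbove j).val) (v ((Fin.last k).succAbove j).val))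
      = fun j : Fin k => gaussianReal (a j.val) (v j.val) := by
    funext j
    simp [Fin.succAbove_last]
  have hslice : ∀ t : ℝ,
      (Measure.pi fun j : Fin k =>
        gaussianReal (a ((Fin.last k).succAbove j).val) (v ((Fin.last k).succAbove j).val))
          (Prod.mk t ⁻¹' (e.symm ⁻¹' S))
        = ENNReal.ofReal (bG' a v k t) := by
    intro t
    have hset : Prod.mk t ⁻¹' (e.symm ⁻¹' S)
        = {z : Fin k → ℝ | Monotone z ∧ ∀ j, z j ≤ t} := by
      ext z
      simp only [Set.mem_preimage, hz, hS, Set.mem_setOf_eq]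
      exact monotone_snoc_iff' z t
    rw [hset, hrest, hmeq t]
  have hstep := measure_eq_prod' e hMP hSmeas
  rw [hstep, Measure.prod_apply (e.symm.measurable hSmeas)]
  rw [lintegral_congr hslice]
  simp only [Fin.val_last]
  rw [gaussianReal_of_var_ne_zero _ (hv k),
    lintegral_withDensity_eq_lintegral_mul _ (measurable_gaussianPDF _ _)
      hbmeas.ennreal_ofReal]
  have h3 : ∀ t, (gaussianPDF (a k) (v k) * fun t => ENNReal.ofReal (bG' a v k t)) t
      = ENNReal.ofReal (bG' a v k t * gaussianPDFReal (a k) (v k) t) := by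
    intro t
    simp only [Pi.mul_apply, gaussianPDF]
    rw [mul_comm, ← ENNReal.ofReal_mul (hbpos t)]
  rw [lintegral_congr h3,
    ← ofReal_integral_eq_lintegral_ofReal hint
      (ae_of_all _ fun t => mul_nonneg (hbpos t) (hgnn t))]


/-- Density of the normal distribution `N(m, v)` (mean `m`, variance `v`). -/
noncomputable def normalPDF (m v x : ℝ) : ℝ :=
  (Real.sqrt (2 * Real.pi * v))⁻¹ * Real.exp (-((x - m) ^ 2) / (2 * v))

/-- The recursion `b_0(m,x) = 1`, `b_i(m,x) = ∫_{-∞}^x b_{i-1}(m,t)·φ_i(m,t) dt`,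
where `φseq i` is the density `φ_{i+1}` of the `(i+1)`-th coordinate given the
common factor value `m` (0-indexed). -/
noncomputable def bRec (φseq : ℕ → ℝ → ℝ → ℝ) : ℕ → ℝ → ℝ → ℝ
  | 0, _, _ => 1
  | i + 1, m, x => ∫ t in Set.Iic x, bRec φseq i m t * φseq i m t

/-- Recursive integration formula for the probability of the ranking event in the
one-factor model `X i = σ i·(√ρ·M + √(1-ρ)·Z i) + μ i` with `M, Z_1,…,Z_n` i.i.d.
standard normal: `P(X_1 ≤ ⋯ ≤ X_n) = ∫∫ φ(m)·b_{n-1}(m,x)·φ_n(m,x) dx dm`, where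
`φ_i(m,·)` is the density of `N(μ_i + σ_i√ρ·m, σ_i²(1-ρ))` and `φ` the standard
normal density. -/
theorem stmt14 {Ω : Type*} [MeasureSpace Ω] (hP : IsProbabilityMeasure (ℙ : Measure Ω))
    (n : ℕ) (hn : 1 ≤ n) (ρ : ℝ) (hρ0 : 0 ≤ ρ) (hρ1 : ρ < 1)
    (μ : Fin n → ℝ) (σ : Fin n → ℝ) (hσ : ∀ i, 0 < σ i)
    (M : Ω → ℝ) (Z : Fin n → Ω → ℝ)
    (W : Fin (n + 1) → Ω → ℝ) (hW : W = Fin.cons M Z)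
    (hmeas : ∀ i, Measurable (W i))
    (hindep : iIndepFun W ℙ)
    (hdist : ∀ i, Measure.map (W i) ℙ = gaussianReal 0 1)
    (X : Fin n → Ω → ℝ)
    (hX : ∀ i ω, X i ω = σ i * (Real.sqrt ρ * M ω + Real.sqrt (1 - ρ) * Z i ω) + μ i)
    (φseq : ℕ → ℝ → ℝ → ℝ)
    (hφ : ∀ i : Fin n, ∀ m x,
      φseq i.val m x = normalPDF (μ i + σ i * Real.sqrt ρ * m) ((σ i) ^ 2 * (1 - ρ)) x) :
    (ℙ {ω | Monotone fun i => X i ω}).toReal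
      = ∫ m, ∫ x, normalPDF 0 1 m * bRec φseq (n - 1) m x * φseq (n - 1) m x := by
  obtain ⟨k, rfl⟩ : ∃ k, n = k + 1 := ⟨n - 1, (Nat.succ_pred_eq_of_pos hn).symm⟩
  simp only [Nat.add_sub_cancel]
  have h1ρ : (0:ℝ) ≤ 1 - ρ := by linarith
  set d : Fin (k+1) → ℝ := fun i => σ i * Real.sqrt (1 - ρ) with hd
  set vν : Fin (k+1) → ℝ≥0 := fun i => ⟨σ i ^ 2 * (1 - ρ), by positivity⟩ with hvν
  have hvne : ∀ i, vν i ≠ 0 := by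
    intro i h
    have hpos : 0 < σ i ^ 2 * (1 - ρ) := mul_pos (pow_pos (hσ i) 2) (by linarith)
    have : ((vν i : ℝ≥0) : ℝ) = 0 := by rw [h]; simp
    rw [hvν] at this
    simp only [NNReal.coe_mk] at this
    exact hpos.ne' this
  -- Step A: law of the vector W
  have hWmeas : Measurable fun ω (i : Fin (k+1+1)) => W i ω := measurable_pi_lambda _ hmeas
  have hmap : Measure.map (fun ω i => W i ω) ℙ
      = Measure.pi (fun _ : Fin (k+1+1) => gaussianReal 0 1) := by
    refine (Measure.pi_eq fun s hs => ?_).symm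
    rw [Measure.map_apply hWmeas (MeasurableSet.univ_pi hs)]
    have hpre : (fun ω i => W i ω) ⁻¹' Set.pi Set.univ s = ⋂ i ∈ Finset.univ, W i ⁻¹' s i := by
      ext ω
      simp [Set.mem_pi]
    rw [hpre, hindep.measure_inter_preimage_eq_mul Finset.univ (fun i _ => hs i)]
    refine Finset.prod_congr rfl fun i _ => ?_
    rw [← hdist i, Measure.map_apply (hmeas i) (hs i)]
  -- Step B: the event as a preimage
  set S₀ : Set (Fin (k+1+1) → ℝ) :=
    {w | Monotone fun i : Fin (k+1) => d i * w i.succ + (μ i + σ i * Real.sqrt ρ * w 0)} with hS₀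
  have hS₀meas : MeasurableSet S₀ := by
    refine measurableSet_monotone' _ fun i => ?_
    exact ((measurable_pi_apply i.succ).const_mul _).add
      (((measurable_pi_apply 0).const_mul _).const_add _)
  have hfun : ∀ ω (i : Fin (k+1)),
      X i ω = d i * W i.succ ω + (μ i + σ i * Real.sqrt ρ * W 0 ω) := by
    intro ω i
    rw [hX, hW]
    simp only [Fin.cons_succ, Fin.cons_zero, hd]
    ring
  have hev : {ω | Monotone fun i => X i ω} = (fun ω i => W i ω) ⁻¹' S₀ := by
    ext ω
    have h : (fun i : Fin (k+1) => X i ω)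
        = fun i : Fin (k+1) => d i * W i.succ ω + (μ i + σ i * Real.sqrt ρ * W 0 ω) :=
      funext fun i => hfun ω i
    simp only [Set.mem_setOf_eq, Set.mem_preimage, hS₀, Set.mem_setOf_eq]
    rw [h]
  have hPev : ℙ {ω | Monotone fun i => X i ω}
      = Measure.pi (fun _ : Fin (k+1+1) => gaussianReal 0 1) S₀ := by
    rw [hev, ← hmap, Measure.map_apply hWmeas hS₀meas]
  -- Step C: peel off the first coordinate
  set e0 := MeasurableEquiv.piFinSuccAbove (fun _ : Fin (k+1+1) => ℝ) 0 with he0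
  have hMP0 := measurePreserving_piFinSuccAbove
    (fun _ : Fin (k+1+1) => gaussianReal 0 1) 0
  have hT0 : MeasurableSet (e0.symm ⁻¹' S₀) := e0.symm.measurable hS₀meas
  have hz0 : ∀ (m : ℝ) (z : Fin (k+1) → ℝ) (i : Fin (k+1)),
      e0.symm (m, z) i.succ = z i ∧ e0.symm (m, z) 0 = m := by
    intro m z i
    constructor
    · show (Fin.insertNthEquiv (fun _ => ℝ) 0) (m, z) i.succ = z i
      simp [Fin.insertNthEquiv_zero, Fin.cons_succ]
    · show (Fin.insertNthEquiv (fun _ => ℝ) 0) (m, z) 0 = m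
      simp [Fin.insertNthEquiv_zero, Fin.cons_zero]
  have hslice0 : ∀ m : ℝ, Prod.mk m ⁻¹' (e0.symm ⁻¹' S₀)
      = {z : Fin (k+1) → ℝ |
          Monotone fun i => d i * z i + (μ i + σ i * Real.sqrt ρ * m)} := by
    intro m
    ext z
    simp only [Set.mem_preimage, hS₀, Set.mem_setOf_eq]
    have h : (fun i : Fin (k+1) =>
        d i * e0.symm (m, z) i.succ + (μ i + σ i * Real.sqrt ρ * e0.symm (m, z) 0))
        = fun i : Fin (k+1) => d i * z i + (μ i + σ i * Real.sqrt ρ * m) := by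
      funext i
      rw [(hz0 m z i).1, (hz0 m z i).2]
    rw [h]
  -- Step D: per-m computation
  have hm_eq : ∀ m : ℝ,
      0 ≤ (∫ x, bRec φseq k m x * φseq k m x) ∧
      (Measure.pi fun _ : Fin (k+1) => gaussianReal 0 1)
        {z : Fin (k+1) → ℝ | Monotone fun i => d i * z i + (μ i + σ i * Real.sqrt ρ * m)}
        = ENNReal.ofReal (∫ x, bRec φseq k m x * φseq k m x) := by
    intro m
    set c : Fin (k+1) → ℝ := fun i => μ i + σ i * Real.sqrt ρ * m with hc
    have hmp : ∀ i : Fin (k+1), MeasurePreserving (fun t => d i * t + c i)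
        (gaussianReal 0 1) (gaussianReal (c i) (vν i)) := by
      intro i
      refine ⟨(measurable_id.const_mul _).add_const _, ?_⟩
      have hcomp : (fun t : ℝ => d i * t + c i) = (fun t => t + c i) ∘ (fun t => d i * t) := rfl
      rw [hcomp, ← Measure.map_map (f := fun t : ℝ => d i * t) (g := fun t : ℝ => t + c i) (measurable_id'.add_const _) (measurable_id'.const_mul _)]
      have hmul : Measure.map (fun t : ℝ => d i * t) (gaussianReal 0 1)
          = gaussianReal 0 (NNReal.mk (d i ^ 2) (sq_nonneg _)) := by
        have h := gaussianReal_map_const_mul (μ := 0) (v := 1) (d i)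
        simpa using h
      rw [hmul, gaussianReal_map_add_const]
      have hveq : (NNReal.mk (d i ^ 2) (sq_nonneg _) : ℝ≥0) = vν i := by
        ext
        show d i ^ 2 = σ i ^ 2 * (1 - ρ)
        rw [hd]
        rw [mul_pow, Real.sq_sqrt h1ρ]
      rw [hveq, zero_add]
    have hFP := measurePreserving_pi _ _ hmp
    have hMono : MeasurableSet {y : Fin (k+1) → ℝ | Monotone y} :=
      measurableSet_monotone' _ fun i => measurable_pi_apply i
    have hset : {z : Fin (k+1) → ℝ | Monotone fun i => d i * z i + c i}
        = (fun (z : Fin (k+1) → ℝ) (i : Fin (k+1)) => d i * z i + c i) ⁻¹'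
          {y : Fin (k+1) → ℝ | Monotone y} := rfl
    set aE : ℕ → ℝ := fun j => if h : j < k+1 then c ⟨j, h⟩ else 0 with haE
    set vE : ℕ → ℝ≥0 := fun j => if h : j < k+1 then vν ⟨j, h⟩ else 1 with hvE
    have hvEne : ∀ j, vE j ≠ 0 := by
      intro j
      by_cases h : j < k+1
      · simpa [hvE, Nat.lt_add_one_iff.mp h] using hvne ⟨j, h⟩
      · simp [hvE, show ¬ j ≤ k by omega]
    have hpi_eq : (fun i : Fin (k+1) => gaussianReal (c i) (vν i))
        = fun i : Fin (k+1) => gaussianReal (aE i.val) (vE i.val) := by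
      funext i
      simp [haE, hvE, Nat.lt_add_one_iff.mp i.isLt]
    have hφE : ∀ j (hj : j < k+1) t, φseq j m t = gaussianPDFReal (aE j) (vE j) t := by
      intro j hj t
      simp only [haE, hvE, dif_pos hj]
      exact (hφ ⟨j, hj⟩ m t).trans rfl
    have hb : ∀ j : ℕ, j ≤ k → bRec φseq j m = bG' aE vE j := by
      intro j
      induction j with
      | zero => intro _; rfl
      | succ j ihj =>
        intro hjk
        funext x
        show (∫ t in Set.Iic x, bRec φseq j m t * φseq j m t)
          = ∫ t in Set.Iic x, bG' aE vE j t * gaussianPDFReal (aE j) (vE j) t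
        rw [ihj (Nat.le_of_succ_le hjk)]
        congr 1
        funext t
        rw [hφE j (Nat.lt_succ_of_le (Nat.le_of_succ_le hjk)) t]
    have hbk : bRec φseq k m = bG' aE vE k := hb k le_rfl
    have hφk : ∀ t, φseq k m t = gaussianPDFReal (aE k) (vE k) t :=
      fun t => hφE k (Nat.lt_succ_self k) t
    have hInt_eq : (∫ x, bRec φseq k m x * φseq k m x)
        = ∫ t, bG' aE vE k t * gaussianPDFReal (aE k) (vE k) t := by
      congr 1
      funext t
      rw [hbk, hφk]
    constructor
    · rw [hInt_eq]
      exact integral_nonneg fun t => mul_nonneg ((bG_main' aE vE hvEne k).2.1 t)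
        (gaussianPDFReal_nonneg _ _ _)
    · rw [hset, hFP.measure_preimage hMono.nullMeasurableSet, hpi_eq,
        bG_final' aE vE hvEne k, hInt_eq]
  -- Step E: outer integration
  set piStd := Measure.pi (fun _ : Fin (k+1) => gaussianReal 0 1) with hpiStd
  have hJmeas : Measurable fun m => piStd (Prod.mk m ⁻¹' (e0.symm ⁻¹' S₀)) :=
    measurable_measure_prodMk_left hT0
  set I : ℝ → ℝ := fun m => ∫ x, bRec φseq k m x * φseq k m x with hI
  have hJ : ∀ m, piStd (Prod.mk m ⁻¹' (e0.symm ⁻¹' S₀)) = ENNReal.ofReal (I m) := by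
    intro m
    rw [hslice0 m]
    exact (hm_eq m).2
  have hImeas : Measurable fun m => normalPDF 0 1 m * I m := by
    have h : (fun m => normalPDF 0 1 m * I m)
        = fun m => gaussianPDFReal 0 1 m * (piStd (Prod.mk m ⁻¹' (e0.symm ⁻¹' S₀))).toReal := by
      funext m
      rw [hJ m, ENNReal.toReal_ofReal (hm_eq m).1]
      rfl
    rw [h]
    exact (measurable_gaussianPDFReal 0 1).mul hJmeas.ennreal_toReal
  have hsplit : Measure.pi (fun _ : Fin (k+1+1) => gaussianReal 0 1) S₀
      = ((gaussianReal 0 1).prod piStd) (e0.symm ⁻¹' S₀) :=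
    measure_eq_prod' e0 hMP0 hS₀meas
  have hlin : ((gaussianReal 0 1).prod piStd) (e0.symm ⁻¹' S₀)
      = ∫⁻ m, ENNReal.ofReal (normalPDF 0 1 m * I m) := by
    rw [Measure.prod_apply hT0]
    rw [gaussianReal_of_var_ne_zero _ one_ne_zero,
      lintegral_withDensity_eq_lintegral_mul _ (measurable_gaussianPDF _ _) hJmeas]
    refine lintegral_congr fun m => ?_
    simp only [Pi.mul_apply, gaussianPDF]
    rw [hJ m, ← ENNReal.ofReal_mul (gaussianPDFReal_nonneg _ _ _)]
    rfl
  rw [hPev, hsplit, hlin]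
  have hRHS : (∫ m, ∫ x, normalPDF 0 1 m * bRec φseq k m x * φseq k m x)
      = ∫ m, normalPDF 0 1 m * I m := by
    congr 1
    funext m
    simp only [hI]
    rw [← integral_const_mul]
    congr 1
    funext x
    ring
  rw [hRHS, integral_eq_lintegral_of_nonneg_ae
    (ae_of_all _ fun m => mul_nonneg (show (0:ℝ) ≤ normalPDF 0 1 m from gaussianPDFReal_nonneg 0 1 m) (hm_eq m).1)
    hImeas.aestronglyMeasurable]
end
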